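/- Let φⱼ, φₖ : ℝ → ℝ be C¹ phases with derivatives Ωⱼ, Ωₖ bounded above by M > 0, with φⱼ(0) = φₖ(0) = 0, and let τⱼⁿ, τₖⁿ denote the unique times with φⱼ(τⱼⁿ) = 2πn and φₖ(τₖⁿ) = 2πn. Suppose the return-time gaps are uniformly bounded: |τᵢⁿ⁺¹ − τᵢⁿ| ≤ Λ for i ∈ {j,k} and all n. If there is a constant κ such that |τⱼⁿ − τₖⁿ| ≤ κ for all n, then for all t ≥ 0, |φⱼ(t) − φₖ(t)| ≤ Mκ + 2ΛM. -/

import Mathlib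

open Real

lemma lip_aux (φ Ω : ℝ → ℝ) (M : ℝ) (hd : ∀ t, HasDerivAt φ (Ω t) t)
    (hb : ∀ t, |Ω t| ≤ M) (a b : ℝ) : |φ b - φ a| ≤ M * |b - a| := by
  have := Convex.norm_image_sub_le_of_norm_hasDerivWithin_le
    (f := φ) (f' := Ω) (C := M) (s := Set.univ)
    (fun x _ => (hd x).hasDerivWithinAt)
    (fun x _ => by simpa using hb x) convex_univ (Set.mem_univ a) (Set.mem_univ b)
  simpa [Real.norm_eq_abs] using this

theorem bounded_event_times_imply_bounded_phase_difference
    (φj φk Ωj Ωk : ℝ → ℝ) (M Λ κ : ℝ)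
    (τj τk : ℕ → ℝ)
    (hdj : ∀ t, HasDerivAt φj (Ωj t) t)
    (hdk : ∀ t, HasDerivAt φk (Ωk t) t)
    (hM : 0 < M)
    (hΩj : ∀ t, 0 < Ωj t ∧ Ωj t ≤ M)
    (hΩk : ∀ t, 0 < Ωk t ∧ Ωk t ≤ M)
    (hφj0 : φj 0 = 0) (hφk0 : φk 0 = 0)
    (hτj0 : 0 ≤ τj 0) (hτk0 : 0 ≤ τk 0)
    (hτj : ∀ n : ℕ, φj (τj n) = 2 * π * n)
    (hτk : ∀ n : ℕ, φk (τk n) = 2 * π * n)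
    (hτjtop : Filter.Tendsto τj Filter.atTop Filter.atTop)
    (hτktop : Filter.Tendsto τk Filter.atTop Filter.atTop)
    (hgapj : ∀ n : ℕ, |τj (n + 1) - τj n| ≤ Λ)
    (hgapk : ∀ n : ℕ, |τk (n + 1) - τk n| ≤ Λ)
    (hκ : ∀ n : ℕ, |τj n - τk n| ≤ κ) :
    ∀ t : ℝ, 0 ≤ t → |φj t - φk t| ≤ M * κ + 2 * Λ * M := by
  intro t ht
  have hbj : ∀ s, |Ωj s| ≤ M := fun s =>
    abs_le.mpr ⟨by linarith [(hΩj s).1], (hΩj s).2⟩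
  have hbk : ∀ s, |Ωk s| ≤ M := fun s =>
    abs_le.mpr ⟨by linarith [(hΩk s).1], (hΩk s).2⟩
  -- φk is strictly monotone, hence injective, so τk 0 = 0
  have hmono : StrictMono φk := by
    apply strictMono_of_deriv_pos
    intro x
    rw [(hdk x).deriv]
    exact (hΩk x).1
  have hτk00 : τk 0 = 0 := by
    have : φk (τk 0) = φk 0 := by
      rw [hτk 0, hφk0]; simp
    exact hmono.injective this
  -- find n with τk n ≤ t < τk (n+1)
  have hex : ∃ n, t < τk n := (hτktop.eventually_gt_atTop t).exists
  set N := Nat.find hex with hN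
  have hNspec : t < τk N := Nat.find_spec hex
  have hNpos : N ≠ 0 := by
    intro h
    rw [h, hτk00] at hNspec
    linarith
  obtain ⟨n, hn⟩ := Nat.exists_eq_succ_of_ne_zero hNpos
  have hle : τk n ≤ t := by
    have := Nat.find_min hex (m := n) (by omega)
    linarith [not_lt.mp this]
  have hlt : t < τk (n + 1) := by rw [show n + 1 = N from hn.symm]; exact hNspec
  -- key distance bounds
  have hΛ0 : τk (n + 1) - τk n ≤ Λ := le_trans (le_abs_self _) (hgapk n)
  have h1 : |t - τk n| ≤ Λ := by
    rw [abs_of_nonneg (by linarith)]; linarith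
  have h2 : |t - τj n| ≤ Λ + κ := by
    have := abs_sub_abs_le_abs_sub (t - τj n) (t - τk n)
    have h3 : |(t - τj n) - (t - τk n)| = |τj n - τk n| := by
      rw [show (t - τj n) - (t - τk n) = -(τj n - τk n) by ring, abs_neg]
    calc |t - τj n| ≤ |t - τk n| + |τk n - τj n| := by
          have := abs_sub_le (t) (τk n) (τj n)
          simpa [abs_sub_comm] using abs_sub_le t (τk n) (τj n)
      _ ≤ Λ + κ := by
          have := hκ n
          rw [abs_sub_comm] at this
          linarith
  have heq : φj (τj n) = φk (τk n) := by rw [hτj n, hτk n]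
  have hA : |φj t - φj (τj n)| ≤ M * (Λ + κ) := by
    calc |φj t - φj (τj n)| ≤ M * |t - τj n| := lip_aux φj Ωj M hdj hbj _ _
      _ ≤ M * (Λ + κ) := by
          exact mul_le_mul_of_nonneg_left h2 hM.le
  have hB : |φk (τk n) - φk t| ≤ M * Λ := by
    calc |φk (τk n) - φk t| ≤ M * |τk n - t| := lip_aux φk Ωk M hdk hbk _ _
      _ ≤ M * Λ := by
          rw [abs_sub_comm]
          exact mul_le_mul_of_nonneg_left h1 hM.le
  calc |φj t - φk t| = |(φj t - φj (τj n)) + (φk (τk n) - φk t)| := by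
        rw [heq]; ring_nf
    _ ≤ |φj t - φj (τj n)| + |φk (τk n) - φk t| := abs_add_le _ _
    _ ≤ M * (Λ + κ) + M * Λ := add_le_add hA hB
    _ = M * κ + 2 * Λ * M := by ring
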